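/- For all α with −1 < α < 0 and all x with 0 < x < 1, one has 0 < (1 + α)·x^{(1+α)/2}·log(1/x) / (1 − x^{1 + α + (1+α)²/2}) < 1. -/

import Mathlib

open scoped Real

lemma key_log_ineq (u : ℝ) (hu0 : 0 < u) (hu1 : u ≤ 1) :
    0 ≤ 1 - u ^ 2 + 2 * u * Real.log u := by
  set f : ℝ → ℝ := fun v => 1 - v ^ 2 + 2 * v * Real.log v with hf
  have hderiv : ∀ v ∈ Set.Ioo u 1, HasDerivAt f (2 * (1 - v + Real.log v)) v := by
    intro v hv
    have hv0 : 0 < v := lt_of_lt_of_le hu0 hv.1.le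
    have h1 : HasDerivAt (fun w : ℝ => w * Real.log w) (Real.log v + 1) v := by
      have := (hasDerivAt_id v).mul (Real.hasDerivAt_log hv0.ne')
      exact this.congr_deriv (by rw [one_mul, id_eq, mul_inv_cancel₀ hv0.ne'])
    have h2 : HasDerivAt f (0 - 2 * v + 2 * (Real.log v + 1)) v := by
      have := ((hasDerivAt_const v (1 : ℝ)).sub ((hasDerivAt_pow 2 v))).add
        ((h1.const_mul 2))
      have e : f = ((fun x => 1) - fun x => x ^ 2) + fun y => 2 * (y * Real.log y) := by
        funext w; simp only [hf, Pi.add_apply, Pi.sub_apply]; ring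
      rw [e]; exact this.congr_deriv (by norm_num)
    convert h2 using 1
    ring
  have hanti : AntitoneOn f (Set.Icc u 1) := by
    apply antitoneOn_of_hasDerivWithinAt_nonpos (convex_Icc u 1)
      (f' := fun v => 2 * (1 - v + Real.log v))
    · apply ContinuousOn.add
      · fun_prop
      · apply ContinuousOn.mul (by fun_prop)
        apply Real.continuousOn_log.mono
        intro v hv
        exact fun h => absurd (h ▸ hv.1) (not_le.2 hu0)
    · intro v hv
      rw [interior_Icc] at hv ⊢
      exact ((hderiv v hv).hasDerivWithinAt)
    · intro v hv
      rw [interior_Icc] at hv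
      have hv0 : 0 < v := lt_of_lt_of_le hu0 hv.1.le
      have := Real.log_le_sub_one_of_pos hv0
      nlinarith
  have h := hanti (Set.mem_Icc.2 ⟨le_rfl, hu1⟩) (Set.mem_Icc.2 ⟨hu1, le_rfl⟩) hu1
  simpa [hf] using h

/-- For `-1 < α < 0` and `0 < x < 1`,
`0 < (1+α)·x^{(1+α)/2}·log(1/x)/(1 - x^{1+α+(1+α)²/2}) < 1`. -/
theorem weight_quotient_bound (α x : ℝ) (hα1 : -1 < α) (hα2 : α < 0)
    (hx1 : 0 < x) (hx2 : x < 1) :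
    0 < (1 + α) * x ^ ((1 + α) / 2) * Real.log (1 / x) /
        (1 - x ^ (1 + α + (1 + α) ^ 2 / 2)) ∧
    (1 + α) * x ^ ((1 + α) / 2) * Real.log (1 / x) /
        (1 - x ^ (1 + α + (1 + α) ^ 2 / 2)) < 1 := by
  set β := 1 + α with hβ
  have hβ0 : 0 < β := by linarith
  have hlogx : Real.log x < 0 := Real.log_neg hx1 hx2
  have hlog : Real.log (1 / x) = -Real.log x := by
    rw [one_div, Real.log_inv]
  set A := x ^ (β / 2) with hA
  have hA0 : 0 < A := Real.rpow_pos_of_pos hx1 _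
  have hA1 : A < 1 := Real.rpow_lt_one hx1.le hx2 (by positivity)
  -- denominator positive
  have he2 : (0:ℝ) < β + β ^ 2 / 2 := by positivity
  have hD1 : x ^ (β + β ^ 2 / 2) < 1 := Real.rpow_lt_one hx1.le hx2 he2
  have hD : 0 < 1 - x ^ (β + β ^ 2 / 2) := by linarith
  -- numerator positive
  have hN : 0 < β * A * Real.log (1 / x) := by
    rw [hlog]
    have : 0 < -Real.log x := by linarith
    positivity
  -- key: x^{β+β²/2} < x^β = A²
  have hexp : x ^ (β + β ^ 2 / 2) < x ^ β :=
    Real.rpow_lt_rpow_of_exponent_gt hx1 hx2 (by nlinarith)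
  have hAsq : x ^ β = A ^ 2 := by
    rw [hA, ← Real.rpow_natCast (x ^ (β/2)) 2, ← Real.rpow_mul hx1.le]
    norm_num
  -- log A = (β/2) log x
  have hlogA : Real.log A = β / 2 * Real.log x := Real.log_rpow hx1 _
  have hkey := key_log_ineq A hA0 hA1.le
  rw [hlogA] at hkey
  have hNle : β * A * Real.log (1 / x) ≤ 1 - A ^ 2 := by
    rw [hlog]; nlinarith
  have hlt : β * A * Real.log (1 / x) < 1 - x ^ (β + β ^ 2 / 2) := by
    rw [hAsq] at hexp
    linarith
  constructor
  · exact div_pos hN hD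
  · rw [div_lt_one hD]
    exact hlt
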